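/- Let G be a finite group, N ⊴ G, and θ a G-invariant irreducible character of N. Suppose that for every prime q and every subgroup Q ≤ G with N ≤ Q and Q/N ∈ Syl_q(G/N), θ extends to Q. Then θ extends to G. -/

import Mathlib

open CategoryTheory
open scoped Classical

noncomputable def cInner {X : Type} (f g : X → ℂ) : ℂ :=
  (Nat.card X : ℂ)⁻¹ * ∑ᶠ x, f x * (starRingEnd ℂ) (g x)

def IsChar (G : Type) [Group G] (χ : G → ℂ) : Prop :=
  ∃ V : FDRep ℂ G, FDRep.character V = χ

def IsIrrChar (G : Type) [Group G] (χ : G → ℂ) : Prop :=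
  ∃ V : FDRep ℂ G, Simple V ∧ FDRep.character V = χ

open Module Representation


noncomputable section
namespace St14
variable {G : Type} [Group G]

/-- Build an `FDRep` morphism from an equivariant linear map. -/
def mkHom {V W : FDRep ℂ G} (f : V →ₗ[ℂ] W) (hf : ∀ g, f ∘ₗ V.ρ g = W.ρ g ∘ₗ f) : V ⟶ W :=
  ⟨FGModuleCat.ofHom f, fun g => by apply FGModuleCat.hom_ext; exact hf g⟩

@[simp] lemma mkHom_hom {V W : FDRep ℂ G} (f : V →ₗ[ℂ] W) (hf) : (mkHom f hf).hom.hom.hom = f := rfl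

lemma hom_ext {V W : FDRep ℂ G} {f g : V ⟶ W} (h : f.hom.hom.hom = g.hom.hom.hom) : f = g := by
  exact Action.Hom.ext (FGModuleCat.hom_ext h)

lemma hom_congr {V W : FDRep ℂ G} {f g : V ⟶ W} (h : f = g) (v : V) :
    f.hom v = g.hom v := by rw [h]

lemma hom_equivariant {V W : FDRep ℂ G} (f : V ⟶ W) (g : G) (v : V) :
    f.hom (V.ρ g v) = W.ρ g (f.hom v) := by
  have := congrArg (fun φ => φ.hom.hom v) (f.comm g); exact this

lemma comp_hom_apply {U V W : FDRep ℂ G} (f : U ⟶ V) (g : V ⟶ W) (u : U) :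
    (f ≫ g).hom u = g.hom (f.hom u) := rfl

lemma zero_hom_apply {V W : FDRep ℂ G} (v : V) : (0 : V ⟶ W).hom v = 0 := rfl

lemma id_hom_apply {V : FDRep ℂ G} (v : V) : (𝟙 V : V ⟶ V).hom v = v := rfl

/-- The subrepresentation on an invariant submodule. -/
def subrep (V : FDRep ℂ G) (p : Submodule ℂ V) (hp : ∀ g : G, ∀ x ∈ p, V.ρ g x ∈ p) :
    FDRep ℂ G :=
  FDRep.of
    { toFun := fun g => (V.ρ g).restrict (hp g)
      map_one' := by ext x; simp [LinearMap.restrict_apply]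
      map_mul' := by intro g h; ext x; simp [LinearMap.restrict_apply] }

def subrepIncl (V : FDRep ℂ G) (p : Submodule ℂ V) (hp : ∀ g : G, ∀ x ∈ p, V.ρ g x ∈ p) :
    subrep V p hp ⟶ V :=
  mkHom (p.subtype) (by intro g; ext x; rfl)

/-- Concrete irreducibility. -/
def IsIrred (V : FDRep ℂ G) : Prop :=
  Nontrivial V ∧ ∀ p : Submodule ℂ V, (∀ g : G, ∀ x ∈ p, V.ρ g x ∈ p) → p = ⊥ ∨ p = ⊤

lemma nontrivial_of_simple (V : FDRep ℂ G) [Simple V] : Nontrivial V := by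
  rw [← not_subsingleton_iff_nontrivial]
  intro hs
  have h0 : (𝟙 V : V ⟶ V) = 0 := by
    apply hom_ext; apply LinearMap.ext; intro v
    exact hs.elim _ _
  exact (Simple.mono_isIso_iff_nonzero (𝟙 V)).mp inferInstance h0

lemma isIrred_of_simple (V : FDRep ℂ G) [Simple V] : IsIrred V := by
  refine ⟨nontrivial_of_simple V, fun p hp => ?_⟩
  by_cases hbot : p = ⊥
  · exact Or.inl hbot
  right
  set i := subrepIncl V p hp with hidef
  have hmono : Mono i := by
    constructor
    intro Z f g h
    apply hom_ext
    apply LinearMap.ext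
    intro z
    have h2 := hom_congr h z
    rw [comp_hom_apply, comp_hom_apply] at h2
    exact Subtype.ext h2
  have hne : i ≠ 0 := by
    obtain ⟨x, hx, hx0⟩ := Submodule.exists_mem_ne_zero_of_ne_bot hbot
    intro h
    have h2 := hom_congr h (show ↥p from ⟨x, hx⟩)
    exact hx0 h2
  have : IsIso i := isIso_of_mono_of_nonzero hne
  rw [eq_top_iff]
  intro v _
  have h1 := hom_congr (IsIso.inv_hom_id i) v
  rw [comp_hom_apply, id_hom_apply] at h1
  have hm : i.hom ((CategoryTheory.inv i).hom v) ∈ p :=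
    ((CategoryTheory.inv i).hom v).2
  rwa [h1] at hm

lemma simple_of_isIrred (V : FDRep ℂ G) (h : IsIrred V) : Simple V := by
  obtain ⟨hnt, hirr⟩ := h
  constructor
  intro Y f hmono
  constructor
  · intro hiso hf0
    obtain ⟨x, y, hxy⟩ := hnt
    apply hxy
    have hx := hom_congr (IsIso.inv_hom_id f) x
    have hy := hom_congr (IsIso.inv_hom_id f) y
    rw [comp_hom_apply, id_hom_apply] at hx hy
    have hfh : ∀ z, f.hom z = 0 := fun z => by rw [hf0]; exact rfl
    rw [← hx, ← hy, hfh, hfh]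
  · intro hf0
    have hrangeinv : ∀ g : G, ∀ x ∈ LinearMap.range f.hom.hom.hom, V.ρ g x ∈ LinearMap.range f.hom.hom.hom := by
      rintro g x ⟨y, rfl⟩
      exact ⟨Y.ρ g y, (hom_equivariant f g y)⟩
    have hrange : LinearMap.range f.hom.hom.hom = ⊤ := by
      rcases hirr _ hrangeinv with hb | ht
      · exact absurd (hom_ext (LinearMap.range_eq_bot.mp hb)) hf0
      · exact ht
    have hsurj : Function.Surjective f.hom.hom.hom := LinearMap.range_eq_top.mp hrange
    have hkerinv : ∀ g : G, ∀ x ∈ LinearMap.ker f.hom.hom.hom, Y.ρ g x ∈ LinearMap.ker f.hom.hom.hom := by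
      intro g x hx
      rw [LinearMap.mem_ker] at hx ⊢
      exact (hom_equivariant f g x).trans (by change V.ρ g (f.hom.hom.hom x) = 0; rw [hx, map_zero])
    have hker : LinearMap.ker f.hom.hom.hom = ⊥ := by
      by_contra hne
      obtain ⟨x, hx, hx0⟩ := Submodule.exists_mem_ne_zero_of_ne_bot hne
      set j := subrepIncl Y _ hkerinv with hjdef
      have hj : j ≫ f = 0 ≫ f := by
        apply hom_ext
        apply LinearMap.ext
        intro z
        show f.hom (j.hom z) = f.hom ((0 : subrep Y (LinearMap.ker f.hom.hom.hom) hkerinv ⟶ Y).hom z)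
        rw [zero_hom_apply, map_zero]
        exact z.2
      have h3 := hom_congr (hmono.right_cancellation _ _ hj) (show ↥(LinearMap.ker f.hom.hom.hom) from ⟨x, hx⟩)
      exact hx0 h3
    have hinj : Function.Injective f.hom := LinearMap.ker_eq_bot.mp hker
    set e := LinearEquiv.ofBijective f.hom.hom.hom ⟨hinj, hsurj⟩ with hedef
    set es : V →ₗ[ℂ] Y := e.symm.toLinearMap with hesdef
    have hsymm : ∀ g : G, es ∘ₗ V.ρ g = Y.ρ g ∘ₗ es := by
      intro g
      apply LinearMap.ext
      intro v
      apply hinj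
      simp only [LinearMap.coe_comp, Function.comp_apply]
      refine (e.apply_symm_apply _).trans ?_
      refine Eq.trans ?_ (hom_equivariant f g _).symm
      rw [show f.hom (es v) = v from e.apply_symm_apply v]
    refine ⟨⟨mkHom es hsymm, ?_, ?_⟩⟩
    · apply hom_ext; apply LinearMap.ext; intro y
      exact e.symm_apply_apply y
    · apply hom_ext; apply LinearMap.ext; intro v
      exact e.apply_symm_apply v

set_option linter.unusedSectionVars false
variable {H : Type} [Group H] [Fintype H]

instance cardInvertible : Invertible ((Fintype.card H : ℂ)) :=
  invertibleOfNonzero (Nat.cast_ne_zero.mpr Fintype.card_ne_zero)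

lemma finrank_invariants_char (V W : FDRep ℂ H) :
    ((finrank ℂ (linHom V.ρ W.ρ).invariants : ℕ) : ℂ) =
      (Fintype.card H : ℂ)⁻¹ * ∑ g : H, V.character g⁻¹ * W.character g := by
  have h := FDRep.average_char_eq_finrank_invariants (FDRep.of (linHom V.ρ W.ρ))
  have h2 : ∀ g : H, (FDRep.of (linHom V.ρ W.ρ)).character g =
      V.character g⁻¹ * W.character g := fun g => FDRep.char_linHom V W g
  have h3 : ((finrank ℂ (linHom V.ρ W.ρ).invariants : ℕ) : ℂ) =
      ⅟((Fintype.card H : ℂ)) • ∑ g : H, (FDRep.of (linHom V.ρ W.ρ)).character g := by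
    rw [smul_eq_mul, invOf_eq_inv, ← Nat.card_eq_fintype_card]; exact h.symm
  rw [h3]
  simp only [h2, smul_eq_mul, invOf_eq_inv]

lemma finrank_invariants_eq_hom (V W : FDRep ℂ H) :
    finrank ℂ (linHom V.ρ W.ρ).invariants = finrank ℂ (V ⟶ W) :=
  (Representation.linHom.invariantsEquivFDRepHom (k := ℂ) (G := H) V W).finrank_eq

lemma finrank_hom_self (V : FDRep ℂ H) [Simple V] : finrank ℂ (V ⟶ V) = 1 := by
  rw [FDRep.finrank_hom_simple_simple V V, if_pos ⟨Iso.refl V⟩]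

lemma mem_invariants_linHom {V W : FDRep ℂ H} (f : V →ₗ[ℂ] W)
    (hf : ∀ g, f ∘ₗ V.ρ g = W.ρ g ∘ₗ f) : f ∈ (linHom V.ρ W.ρ).invariants := by
  rw [Representation.mem_invariants]
  intro g
  rw [linHom_apply]
  have h1 : f ∘ₗ V.ρ g⁻¹ = W.ρ g⁻¹ ∘ₗ f := hf g⁻¹
  rw [h1, ← LinearMap.comp_assoc]
  have : W.ρ g ∘ₗ W.ρ g⁻¹ = LinearMap.id := by
    have := map_mul W.ρ g g⁻¹
    rw [mul_inv_cancel] at this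
    rw [← Module.End.mul_eq_comp, ← this, map_one]
    rfl
  rw [this, LinearMap.id_comp]

lemma invariants_linHom_equivariant {V W : FDRep ℂ H} (f : (V →ₗ[ℂ] W))
    (hf : f ∈ (linHom V.ρ W.ρ).invariants) (g : H) : f ∘ₗ V.ρ g = W.ρ g ∘ₗ f := by
  rw [Representation.mem_invariants] at hf
  have h := hf g
  rw [linHom_apply] at h
  apply LinearMap.ext; intro v
  have h2 := LinearMap.congr_fun h (V.ρ g v)
  simp only [LinearMap.coe_comp, Function.comp_apply] at h2
  rw [← Module.End.mul_apply, ← map_mul, inv_mul_cancel, map_one, Module.End.one_apply] at h2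
  simp only [LinearMap.coe_comp, Function.comp_apply]
  exact h2.symm

/-- Schur: an equivariant endomorphism of a simple rep is scalar. -/
lemma exists_scalar (V : FDRep ℂ H) [Simple V] (f : V →ₗ[ℂ] V)
    (hf : ∀ g, f ∘ₗ V.ρ g = V.ρ g ∘ₗ f) : ∃ c : ℂ, f = c • LinearMap.id := by
  set S := (linHom V.ρ V.ρ).invariants with hS
  have hfS : f ∈ S := mem_invariants_linHom f hf
  have hidS : LinearMap.id ∈ S := mem_invariants_linHom _ (by intro g; rw [LinearMap.id_comp, LinearMap.comp_id])
  have h1 : finrank ℂ S = 1 := by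
    rw [hS, finrank_invariants_eq_hom V V, finrank_hom_self V]
  have hnt : Nontrivial V := nontrivial_of_simple V
  have hid0 : (⟨LinearMap.id, hidS⟩ : S) ≠ 0 := by
    intro h
    obtain ⟨x, hx⟩ := exists_ne (0 : V)
    apply hx
    have := congrArg (fun q : S => (q : V →ₗ[ℂ] V) x) h
    simpa using this
  obtain ⟨c, hc⟩ := (finrank_eq_one_iff_of_nonzero' (⟨LinearMap.id, hidS⟩ : S) hid0).mp h1 ⟨f, hfS⟩
  refine ⟨c, ?_⟩
  have := congrArg (fun q : S => (q : V →ₗ[ℂ] V)) hc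
  simpa using this.symm


section Cocycle
variable {K : Type} [Group K] [Fintype K]

def IsCocycle (β : K → K → ℂ) : Prop :=
  ∀ a b c, β a b * β (a * b) c = β b c * β a (b * c)

private lemma key' (β : K → K → ℂ) (hco : IsCocycle β)
    (a b t1 t2 t3 h1 h2 : K)
    (r1 : b * t1 = t2 * h2) (r2 : a * t2 = t3 * h1) :
    β a t2 * β b t1 * β h1 h2 * β t3 (h1 * h2)
      = β a b * β (a * b) t1 * β t3 h1 * β t2 h2 := by
  have E1 := hco a b t1
  rw [r1] at E1
  have E2 := hco a t2 h2
  rw [r2] at E2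
  have E3 := hco t3 h1 h2
  linear_combination (-(β t3 h1 * β t2 h2)) * E1 + (β b t1 * β t3 h1) * E2
    + (-(β a t2 * β b t1)) * E3

private lemma key (β : K → K → ℂ) (ν : K → ℂ)
    (hco : IsCocycle β)
    (a b t1 t2 t3 h1 h2 : K)
    (r1 : b * t1 = t2 * h2) (r2 : a * t2 = t3 * h1)
    (hD : β h1 h2 = ν h1 * ν h2 / ν (h1 * h2))
    (hb1 : β t3 h1 ≠ 0) (hb2 : β t2 h2 ≠ 0) (hb3 : β t3 (h1 * h2) ≠ 0)
    (hν12 : ν (h1 * h2) ≠ 0) :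
    (β a t2 * (β t3 h1)⁻¹ * ν h1) * (β b t1 * (β t2 h2)⁻¹ * ν h2)
      = β a b * (β (a * b) t1 * (β t3 (h1 * h2))⁻¹ * ν (h1 * h2)) := by
  have hk := key' β hco a b t1 t2 t3 h1 h2 r1 r2
  field_simp at hD ⊢
  linear_combination (ν (h1*h2)) * hk - (β a t2 * β b t1 * β t3 (h1*h2)) * hD

set_option linter.unusedSectionVars false

lemma transfer (β : K → K → ℂ) (hβ0 : ∀ a b, β a b ≠ 0) (hco : IsCocycle β)
    (H : Subgroup K) (ν : K → ℂ) (hν0 : ∀ a, ν a ≠ 0)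
    (hν : ∀ a ∈ H, ∀ b ∈ H, β a b = ν a * ν b / ν (a * b)) :
    ∃ lam : K → ℂ, (∀ a, lam a ≠ 0) ∧
      ∀ a b, β a b ^ (H.index) = lam a * lam b / lam (a * b) := by
  classical
  set t : K ⧸ H → K := fun x => x.out with htdef
  have hmk : ∀ x : K ⧸ H, (QuotientGroup.mk (t x) : K ⧸ H) = x := fun x => QuotientGroup.out_eq' x
  have hmem : ∀ (g : K) (x : K ⧸ H), (t (g • x))⁻¹ * g * t x ∈ H := by
    intro g x
    have h1 : (QuotientGroup.mk (g * t x) : K ⧸ H) = g • x := by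
      calc (QuotientGroup.mk (g * t x) : K ⧸ H)
          = g • (QuotientGroup.mk (t x) : K ⧸ H) := (MulAction.Quotient.smul_mk H g (t x)).symm
        _ = g • x := by rw [hmk]
    have h2 : (QuotientGroup.mk (t (g • x)) : K ⧸ H) = g • x := hmk _
    have h3 := QuotientGroup.eq.mp (h2.trans h1.symm)
    simpa [mul_assoc] using h3
  set hf : K → (K ⧸ H) → K := fun g x => (t (g • x))⁻¹ * g * t x with hfdef
  set F : K → (K ⧸ H) → ℂ :=
    fun g x => β g (t x) * (β (t (g • x)) (hf g x))⁻¹ * ν (hf g x) with hFdef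
  have hF0 : ∀ g x, F g x ≠ 0 := by
    intro g x
    exact mul_ne_zero (mul_ne_zero (hβ0 _ _) (inv_ne_zero (hβ0 _ _))) (hν0 _)
  set lam : K → ℂ := fun g => ∏ x : K ⧸ H, F g x with hlamdef
  have hlam0 : ∀ g, lam g ≠ 0 := by
    intro g
    exact Finset.prod_ne_zero_iff.mpr fun x _ => hF0 g x
  have step : ∀ (a b : K) (x : K ⧸ H), F a (b • x) * F b x = β a b * F (a * b) x := by
    intro a b x
    have e1 : a • (b • x) = (a * b) • x := smul_smul a b x
    have hD := hν _ (hmem a (b • x)) _ (hmem b x)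
    have h12 : hf (a * b) x = hf a (b • x) * hf b x := by
      simp only [hfdef, e1]
      group
    have r1 : b * t x = t (b • x) * hf b x := by simp only [hfdef]; group
    have r2 : a * t (b • x) = t ((a * b) • x) * hf a (b • x) := by
      simp only [hfdef, e1]; group
    calc F a (b • x) * F b x
        = (β a (t (b • x)) * (β (t ((a * b) • x)) (hf a (b • x)))⁻¹ * ν (hf a (b • x))) *
          (β b (t x) * (β (t (b • x)) (hf b x))⁻¹ * ν (hf b x)) := by
          simp only [hFdef, e1]
      _ = β a b * (β (a * b) (t x) * (β (t ((a * b) • x)) (hf (a * b) x))⁻¹ * ν (hf (a * b) x)) := by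
          rw [h12]
          exact key β ν hco a b (t x) (t (b • x)) (t ((a * b) • x)) (hf a (b • x)) (hf b x)
            r1 r2 hD (hβ0 _ _) (hβ0 _ _) (hβ0 _ _) (hν0 _)
      _ = β a b * F (a * b) x := by simp only [hFdef]
  refine ⟨lam, hlam0, ?_⟩
  intro a b
  have hprod : lam a * lam b = β a b ^ (Fintype.card (K ⧸ H)) * lam (a * b) := by
    have h1 : lam a = ∏ x : K ⧸ H, F a (b • x) := by
      rw [hlamdef]
      exact (Equiv.prod_comp (MulAction.toPerm b) (F a)).symm
    rw [h1, hlamdef, ← Finset.prod_mul_distrib]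
    simp only [step]
    rw [Finset.prod_mul_distrib, Finset.prod_const, Finset.card_univ]
  have hcard : H.index = Fintype.card (K ⧸ H) := by
    rw [Subgroup.index, Nat.card_eq_fintype_card]
  rw [hcard, eq_div_iff (hlam0 _), ← hprod]

/-- If a normalized cocycle trivializes on (the image of) every Sylow subgroup, it trivializes. -/
lemma cob_of_sylow (β : K → K → ℂ) (hβ0 : ∀ a b, β a b ≠ 0) (hco : IsCocycle β)
    (hnorm : β 1 1 = 1)
    (hsyl : ∀ q : ℕ, q.Prime → ∃ (S : Sylow q K) (ν : K → ℂ), (∀ a, ν a ≠ 0) ∧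
      ∀ a ∈ (S : Subgroup K), ∀ b ∈ (S : Subgroup K), β a b = ν a * ν b / ν (a * b)) :
    ∃ μ : K → ℂ, (∀ a, μ a ≠ 0) ∧ ∀ a b, β a b = μ a * μ b / μ (a * b) := by
  classical
  set I : AddSubgroup ℤ :=
    { carrier := { k : ℤ | ∃ ν : K → ℂ, (∀ a, ν a ≠ 0) ∧
        ∀ a b, β a b ^ k = ν a * ν b / ν (a * b) }
      zero_mem' := ⟨fun _ => 1, fun _ => one_ne_zero, by intro a b; simp⟩
      add_mem' := by
        rintro k l ⟨ν, hν0, hν⟩ ⟨ν', hν'0, hν'⟩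
        refine ⟨fun a => ν a * ν' a, fun a => mul_ne_zero (hν0 a) (hν'0 a), ?_⟩
        intro a b
        rw [zpow_add₀ (hβ0 a b), hν a b, hν' a b]
        field_simp
      neg_mem' := by
        rintro k ⟨ν, hν0, hν⟩
        refine ⟨fun a => (ν a)⁻¹, fun a => inv_ne_zero (hν0 a), ?_⟩
        intro a b
        rw [zpow_neg, hν a b]
        field_simp } with hIdef
  have hcard : ((Nat.card K : ℤ)) ∈ I := by
    obtain ⟨lam, hlam0, hlam⟩ := transfer β hβ0 hco ⊥ (fun _ => 1) (fun _ => one_ne_zero)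
      (by intro a ha b hb
          rw [Subgroup.mem_bot] at ha hb
          subst ha; subst hb
          simpa using hnorm)
    refine ⟨lam, hlam0, ?_⟩
    intro a b
    rw [zpow_natCast, ← Subgroup.index_bot]
    exact hlam a b
  have hsylI : ∀ q : ℕ, q.Prime → ∃ S : Sylow q K, ((S : Subgroup K).index : ℤ) ∈ I := by
    intro q hq
    obtain ⟨S, ν, hν0, hν⟩ := hsyl q hq
    obtain ⟨lam, hlam0, hlam⟩ := transfer β hβ0 hco (S : Subgroup K) ν hν0 hν
    exact ⟨S, lam, hlam0, by intro a b; rw [zpow_natCast]; exact hlam a b⟩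
  obtain ⟨d, hd⟩ := Int.subgroup_cyclic I
  have hdvd : ∀ k : ℤ, k ∈ I → d ∣ k := by
    intro k hk
    rw [hd, AddSubgroup.mem_closure_singleton] at hk
    obtain ⟨n, hn⟩ := hk
    exact ⟨n, by rw [← hn, smul_eq_mul]; ring⟩
  have hone : (1 : ℤ) ∈ I := by
    have hd_dvd_card : d ∣ (Nat.card K : ℤ) := hdvd _ hcard
    have hdne : d ≠ 0 := by
      intro h0
      rw [h0] at hd_dvd_card
      have := zero_dvd_iff.mp hd_dvd_card
      have hpos : 0 < Nat.card K := Nat.card_pos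
      omega
    have habs : d.natAbs = 1 := by
      by_contra hne1
      have h2 : 2 ≤ d.natAbs := by
        have := Int.natAbs_ne_zero.mpr hdne
        omega
      obtain ⟨q, hq, hqdvd⟩ := Nat.exists_prime_and_dvd (by omega : d.natAbs ≠ 1)
      obtain ⟨S, hSI⟩ := hsylI q hq
      have h3 : d ∣ ((S : Subgroup K).index : ℤ) := hdvd _ hSI
      have h3' : ((d.natAbs : ℤ)) ∣ ((S : Subgroup K).index : ℤ) := Int.natAbs_dvd.mpr h3
      have h4 : (q : ℤ) ∣ ((S : Subgroup K).index : ℤ) :=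
        dvd_trans (Int.natCast_dvd_natCast.mpr hqdvd) h3'
      have h5 : q ∣ (S : Subgroup K).index := Int.natCast_dvd_natCast.mp h4
      have : Fact q.Prime := ⟨hq⟩
      exact Sylow.not_dvd_index S h5
    -- d = 1 or d = -1; in both cases 1 ∈ I
    have hdmem : d ∈ I := by
      rw [hd]
      exact AddSubgroup.mem_closure_singleton.mpr ⟨1, one_mul d⟩
    rcases Int.natAbs_eq d with h | h
    · rw [habs] at h
      have e : (1 : ℤ) = d := by omega
      rw [e]; exact hdmem
    · rw [habs] at h
      have e : (1 : ℤ) = -d := by omega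
      rw [e]; exact neg_mem hdmem
  obtain ⟨μ, hμ0, hμ⟩ := hone
  refine ⟨μ, hμ0, ?_⟩
  intro a b
  have := hμ a b
  rwa [zpow_one] at this

end Cocycle
section Helpers
set_option linter.unusedSectionVars false
open Module
variable {H : Type} [Group H] [Fintype H]

lemma exists_intertwiner (V : FDRep ℂ H) [Simple V]
    {M : Type} [AddCommGroup M] [Module ℂ M] [FiniteDimensional ℂ M]
    (τ : Representation ℂ H M)
    (hchar : ∀ g : H, (FDRep.of τ).character g = V.character g) :
    ∃ F : V →ₗ[ℂ] M, F ≠ 0 ∧ ∀ g, F ∘ₗ V.ρ g = τ g ∘ₗ F := by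
  have h1 : ((finrank ℂ (linHom V.ρ (FDRep.of τ).ρ).invariants : ℕ) : ℂ)
      = ((finrank ℂ (linHom V.ρ V.ρ).invariants : ℕ) : ℂ) := by
    rw [finrank_invariants_char V (FDRep.of τ), finrank_invariants_char V V]
    congr 1
    exact Finset.sum_congr rfl (fun g _ => by rw [hchar g])
  rw [Nat.cast_inj] at h1
  have h2 : finrank ℂ (linHom V.ρ (FDRep.of τ).ρ).invariants = 1 := by
    rw [h1, finrank_invariants_eq_hom V V, finrank_hom_self V]
  have h3 : (linHom V.ρ (FDRep.of τ).ρ).invariants ≠ ⊥ := by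
    intro hbot
    rw [hbot, finrank_bot] at h2
    exact one_ne_zero h2.symm
  obtain ⟨F, hFmem, hF0⟩ := Submodule.exists_mem_ne_zero_of_ne_bot h3
  exact ⟨F, hF0, fun g => invariants_linHom_equivariant F hFmem g⟩

lemma intertwiner_bijective (V : FDRep ℂ H) [Simple V]
    {M : Type} [AddCommGroup M] [Module ℂ M] [FiniteDimensional ℂ M]
    (τ : Representation ℂ H M) (hrank : finrank ℂ M = finrank ℂ V)
    (F : V →ₗ[ℂ] M) (hF0 : F ≠ 0) (hF : ∀ g, F ∘ₗ V.ρ g = τ g ∘ₗ F) :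
    Function.Bijective F := by
  have hirr := isIrred_of_simple V
  have hker : LinearMap.ker F = ⊥ := by
    rcases hirr.2 (LinearMap.ker F) (by
      intro g x hx
      rw [LinearMap.mem_ker] at hx ⊢
      have h4 := LinearMap.congr_fun (hF g) x
      simp only [LinearMap.coe_comp, Function.comp_apply] at h4
      rw [h4, hx, map_zero]) with h | h
    · exact h
    · exact absurd (LinearMap.ker_eq_top.mp h) hF0
  have hinj := LinearMap.ker_eq_bot.mp hker
  exact ⟨hinj, (LinearMap.injective_iff_surjective_of_finrank_eq_finrank hrank.symm).mp hinj⟩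

lemma rho_bijective {H : Type} [Group H] (V : FDRep ℂ H) (g : H) :
    Function.Bijective (V.ρ g) := by
  refine Function.bijective_iff_has_inverse.mpr ⟨V.ρ g⁻¹, ?_, ?_⟩
  · intro v; rw [← Module.End.mul_apply, ← map_mul, inv_mul_cancel, map_one, Module.End.one_apply]
  · intro v; rw [← Module.End.mul_apply, ← map_mul, mul_inv_cancel, map_one, Module.End.one_apply]

end Helpers
section Conj
set_option linter.unusedSectionVars false
open Module
variable {G : Type} [Group G] (N : Subgroup G) [hN : N.Normal]

/-- Conjugation by `g` as an automorphism of `N`. -/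
def conjHom (g : G) : ↥N →* ↥N where
  toFun n := ⟨g * n * g⁻¹, hN.conj_mem n.1 n.2 g⟩
  map_one' := by ext; simp
  map_mul' a b := by ext; simp only [Subgroup.coe_mul, Submonoid.coe_mul]; group

@[simp] lemma conjHom_coe (g : G) (n : ↥N) : (conjHom N g n : G) = g * n * g⁻¹ := rfl

lemma conjHom_mul (g h : G) (n : ↥N) : conjHom N g (conjHom N h n) = conjHom N (g * h) n := by
  ext; simp only [conjHom_coe]; group

lemma conjHom_one (n : ↥N) : conjHom N 1 n = n := by
  ext; simp

lemma conjHom_inv_cancel (g : G) (n : ↥N) : conjHom N g (conjHom N g⁻¹ n) = n := by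
  ext; simp only [conjHom_coe]; group

variable [Fintype ↥N]

lemma scalar_unique (W : FDRep ℂ ↥N) [Simple W] (A : W →ₗ[ℂ] W)
    (hAbij : Function.Bijective A) (c c' : ℂ) (h : c • A = c' • A) : c = c' := by
  have hnt : Nontrivial W := nontrivial_of_simple W
  obtain ⟨x, hx⟩ := exists_ne (0 : W)
  have hAx : A x ≠ 0 := by
    intro h0
    exact hx (hAbij.1 (by rw [h0, map_zero]))
  have h2 : c • A x = c' • A x := by
    have := LinearMap.congr_fun h x
    simpa using this
  have h3 : (c - c') • A x = 0 := by rw [sub_smul, h2, sub_self]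
  rcases smul_eq_zero.mp h3 with h4 | h4
  · exact sub_eq_zero.mp h4
  · exact absurd h4 hAx

lemma scalar_of_intertwine (W : FDRep ℂ ↥N) [Simple W] (g : G) (A B : W →ₗ[ℂ] W)
    (hA : ∀ n, A ∘ₗ W.ρ n = W.ρ (conjHom N g n) ∘ₗ A)
    (hB : ∀ n, B ∘ₗ W.ρ n = W.ρ (conjHom N g n) ∘ₗ B)
    (hAbij : Function.Bijective A) (hBbij : Function.Bijective B) :
    ∃ c : ℂ, c ≠ 0 ∧ A = c • B := by
  set EB := LinearEquiv.ofBijective B hBbij with hEB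
  have hBsymm : ∀ m : ↥N, ∀ v : W, EB.symm (W.ρ m v) = W.ρ (conjHom N g⁻¹ m) (EB.symm v) := by
    intro m v
    apply hBbij.1
    have h1 : B (EB.symm (W.ρ m v)) = W.ρ m v := EB.apply_symm_apply _
    rw [h1]
    have h2 := LinearMap.congr_fun (hB (conjHom N g⁻¹ m)) (EB.symm v)
    simp only [LinearMap.coe_comp, Function.comp_apply] at h2
    rw [h2, conjHom_inv_cancel]
    congr 1
    exact (EB.apply_symm_apply v).symm
  set D : W →ₗ[ℂ] W := A ∘ₗ EB.symm.toLinearMap with hD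
  have hDint : ∀ m : ↥N, D ∘ₗ W.ρ m = W.ρ m ∘ₗ D := by
    intro m
    apply LinearMap.ext
    intro v
    simp only [hD, LinearMap.coe_comp, Function.comp_apply, LinearEquiv.coe_coe]
    rw [hBsymm m v]
    have h3 := LinearMap.congr_fun (hA (conjHom N g⁻¹ m)) (EB.symm v)
    simp only [LinearMap.coe_comp, Function.comp_apply] at h3
    rw [h3, conjHom_inv_cancel]
  obtain ⟨c, hc⟩ := exists_scalar W D hDint
  have hDbij : Function.Bijective D := hAbij.comp EB.symm.bijective
  have hc0 : c ≠ 0 := by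
    intro h0
    rw [h0, zero_smul] at hc
    have hnt : Nontrivial W := nontrivial_of_simple W
    obtain ⟨x, hx⟩ := exists_ne (0 : W)
    apply hx
    apply hDbij.1
    rw [map_zero, hc]
    rfl
  refine ⟨c, hc0, ?_⟩
  apply LinearMap.ext
  intro v
  have h5 : A v = D (B v) := by
    simp only [hD, LinearMap.coe_comp, Function.comp_apply, LinearEquiv.coe_coe]
    rw [show EB.symm (B v) = v from EB.symm_apply_apply v]
  rw [h5, hc]
  simp

end Conj
end St14

open St14 in
/-- a G-invariant θ ∈ Irr(N) which extends to every Q with Q/N a Sylow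
subgroup of G/N extends to G. -/
theorem stmt14 {G : Type} [Group G] [Finite G] (N : Subgroup G) [hN : N.Normal]
    (θ : ↥N → ℂ) (hθ : IsIrrChar ↥N θ)
    (hinv : ∀ (g : G) (n : ↥N), θ ⟨g * n * g⁻¹, hN.conj_mem n.1 n.2 g⟩ = θ n)
    (hyp : ∀ (q : ℕ), q.Prime → ∀ Q : Subgroup G, ∀ hNQ : N ≤ Q,
      (∃ S : Sylow q (G ⧸ N), (S : Subgroup (G ⧸ N)) = Q.map (QuotientGroup.mk' N)) →
      ∃ ψ : ↥Q → ℂ, IsIrrChar ↥Q ψ ∧ ∀ n : ↥N, ψ ⟨n, hNQ n.2⟩ = θ n) :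
    ∃ χ : G → ℂ, IsIrrChar G χ ∧ ∀ n : ↥N, χ n = θ n := by
  classical
  haveI : Fintype ↥N := Fintype.ofFinite _
  haveI : Fintype (G ⧸ N) := Fintype.ofFinite _
  obtain ⟨W, hWsimple, hWchar⟩ := hθ
  haveI := hWsimple
  -- a section of the quotient map sending 1 to 1
  set s : G ⧸ N → G := fun x => if x = 1 then 1 else x.out with hsdef
  have hs : ∀ x : G ⧸ N, (QuotientGroup.mk (s x) : G ⧸ N) = x := by
    intro x
    by_cases h : x = 1
    · simp [hsdef, h]
    · simp [hsdef, h, QuotientGroup.out_eq']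
  have hs1 : s 1 = 1 := by simp [hsdef]
  -- intertwiners between W and its conjugates
  have hT0 : ∀ g : G, ∃ T : W →ₗ[ℂ] W, Function.Bijective T ∧
      ∀ n : ↥N, T ∘ₗ W.ρ n = W.ρ (conjHom N g n) ∘ₗ T := by
    intro g
    have hchar : ∀ n : ↥N,
        (FDRep.of (W.ρ.comp (conjHom N g))).character n = W.character n := by
      intro n
      have h1 : (FDRep.of (W.ρ.comp (conjHom N g))).character n
          = W.character (conjHom N g n) := rfl
      rw [h1, hWchar]
      exact hinv g n
    obtain ⟨F, hF0, hFe⟩ := exists_intertwiner W (W.ρ.comp (conjHom N g)) hchar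
    have hbij := intertwiner_bijective W (W.ρ.comp (conjHom N g)) rfl F hF0 hFe
    exact ⟨F, hbij, fun n => hFe n⟩
  choose T0 hT0bij hT0int using hT0
  set T : G → (W →ₗ[ℂ] W) := fun g => if g = 1 then LinearMap.id else T0 g with hTdef
  have hTbij : ∀ g, Function.Bijective (T g) := by
    intro g; by_cases h : g = 1
    · simp only [hTdef, if_pos h]; exact Function.bijective_id
    · simp only [hTdef, if_neg h]; exact hT0bij g
  have hT1 : T 1 = LinearMap.id := by simp [hTdef]
  have hTint : ∀ g (n : ↥N), T g ∘ₗ W.ρ n = W.ρ (conjHom N g n) ∘ₗ T g := by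
    intro g n; by_cases h : g = 1
    · subst h
      rw [hT1, conjHom_one, LinearMap.id_comp, LinearMap.comp_id]
    · simp only [hTdef, if_neg h]; exact hT0int g n
  -- the N-part of an element
  have hnmem : ∀ g : G, g * (s (QuotientGroup.mk g))⁻¹ ∈ N := by
    intro g
    rw [← QuotientGroup.eq_one_iff, QuotientGroup.mk_mul, QuotientGroup.mk_inv, hs]
    simp
  set nP : G → ↥N := fun g => ⟨g * (s (QuotientGroup.mk g))⁻¹, hnmem g⟩ with hnPdef
  have hnPcoe : ∀ g : G, (nP g : G) = g * (s (QuotientGroup.mk g))⁻¹ := fun g => rfl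
  have hnPs : ∀ g : G, (nP g : G) * s (QuotientGroup.mk g) = g := by
    intro g; rw [hnPcoe]; group
  set P : G → (W →ₗ[ℂ] W) := fun g => W.ρ (nP g) ∘ₗ T (s (QuotientGroup.mk g)) with hPdef
  have hPdef' : ∀ g, P g = W.ρ (nP g) ∘ₗ T (s (QuotientGroup.mk g)) := fun g => rfl
  have hρbij : ∀ n : ↥N, Function.Bijective (W.ρ n) := by
    intro n
    refine Function.bijective_iff_has_inverse.mpr ⟨W.ρ n⁻¹, ?_, ?_⟩
    · intro v; rw [← Module.End.mul_apply, ← map_mul, inv_mul_cancel, map_one, Module.End.one_apply]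
    · intro v; rw [← Module.End.mul_apply, ← map_mul, mul_inv_cancel, map_one, Module.End.one_apply]
  have hP1 : ∀ g, Function.Bijective (P g) := fun g => (hρbij _).comp (hTbij _)
  have hP3 : ∀ n : ↥N, P ↑n = W.ρ n := by
    intro n
    have hmk : (QuotientGroup.mk (↑n : G) : G ⧸ N) = 1 := (QuotientGroup.eq_one_iff _).mpr n.2
    have hnP : nP ↑n = n := by
      ext
      rw [hnPcoe, hmk, hs1]
      simp
    rw [hPdef', hnP, hmk, hs1, hT1, LinearMap.comp_id]
  have hP_one : P 1 = LinearMap.id := by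
    have h1 := hP3 1
    rw [OneMemClass.coe_one] at h1
    rw [h1, map_one]
    rfl
  have hP2 : ∀ (n : ↥N) (g : G), P (↑n * g) = W.ρ n ∘ₗ P g := by
    intro n g
    have hmkn : (QuotientGroup.mk (↑n : G) : G ⧸ N) = 1 := (QuotientGroup.eq_one_iff _).mpr n.2
    have hmk : (QuotientGroup.mk (↑n * g) : G ⧸ N) = QuotientGroup.mk g := by
      rw [QuotientGroup.mk_mul, hmkn, one_mul]
    have hnP2 : nP (↑n * g) = n * nP g := by
      ext
      rw [hnPcoe, hmk]
      push_cast [hnPcoe]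
      group
    rw [hPdef', hPdef', hnP2, map_mul, hmk, Module.End.mul_eq_comp, LinearMap.comp_assoc]
  have hP4 : ∀ (g : G) (n : ↥N), P g ∘ₗ W.ρ n = W.ρ (conjHom N g n) ∘ₗ P g := by
    intro g n
    have key : nP g * conjHom N (s (QuotientGroup.mk g)) n = conjHom N g n * nP g := by
      ext
      push_cast [hnPcoe, conjHom_coe]
      conv_rhs => rw [← hnPs g, hnPcoe]
      group
    calc P g ∘ₗ W.ρ n
        = W.ρ (nP g) ∘ₗ (T (s (QuotientGroup.mk g)) ∘ₗ W.ρ n) := by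
          rw [hPdef', LinearMap.comp_assoc]
      _ = W.ρ (nP g) ∘ₗ (W.ρ (conjHom N (s (QuotientGroup.mk g)) n)
            ∘ₗ T (s (QuotientGroup.mk g))) := by rw [hTint]
      _ = W.ρ (nP g * conjHom N (s (QuotientGroup.mk g)) n) ∘ₗ T (s (QuotientGroup.mk g)) := by
          rw [map_mul]; rfl
      _ = W.ρ (conjHom N g n * nP g) ∘ₗ T (s (QuotientGroup.mk g)) := by rw [key]
      _ = W.ρ (conjHom N g n) ∘ₗ P g := by
          rw [map_mul, hPdef']; rfl
  -- the factor set
  have halpha : ∀ g h : G, ∃ c : ℂ, c ≠ 0 ∧ P g ∘ₗ P h = c • P (g * h) := by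
    intro g h
    refine scalar_of_intertwine N W (g * h) (P g ∘ₗ P h) (P (g * h)) ?_ (hP4 (g * h))
      ((hP1 g).comp (hP1 h)) (hP1 (g * h))
    intro n
    rw [LinearMap.comp_assoc, hP4 h n, ← LinearMap.comp_assoc, hP4 g, LinearMap.comp_assoc,
      conjHom_mul]
  choose α hα0 hαP using halpha
  have huniq : ∀ (k : G) (c c' : ℂ), c • P k = c' • P k → c = c' := by
    intro k c c' h
    exact scalar_unique N W (P k) (hP1 k) c c' h
  have hαl : ∀ (n : ↥N) (g h : G), α (↑n * g) h = α g h := by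
    intro n g h
    apply huniq ((↑n * g) * h)
    calc α (↑n * g) h • P (↑n * g * h) = P (↑n * g) ∘ₗ P h := (hαP _ _).symm
      _ = (W.ρ n ∘ₗ P g) ∘ₗ P h := by rw [hP2]
      _ = W.ρ n ∘ₗ (P g ∘ₗ P h) := by rw [LinearMap.comp_assoc]
      _ = W.ρ n ∘ₗ (α g h • P (g * h)) := by rw [hαP]
      _ = α g h • (W.ρ n ∘ₗ P (g * h)) := by rw [LinearMap.comp_smul]
      _ = α g h • P (↑n * (g * h)) := by rw [hP2]
      _ = α g h • P (↑n * g * h) := by rw [mul_assoc]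
  have hαr : ∀ (g : G) (n : ↥N) (h : G), α g (↑n * h) = α g h := by
    intro g n h
    apply huniq (g * (↑n * h))
    rw [← hαP g (↑n * h), hP2 n h, ← LinearMap.comp_assoc, hP4 g n, LinearMap.comp_assoc,
      hαP g h, LinearMap.comp_smul]
    congr 1
    have hco : (↑(conjHom N g n) : G) * (g * h) = g * (↑n * h) := by
      rw [conjHom_coe]; group
    rw [← hP2 (conjHom N g n) (g * h), hco]
  have hacoset : ∀ g h : G, α g h = α (s (QuotientGroup.mk g)) (s (QuotientGroup.mk h)) := by
    intro g h
    conv_lhs => rw [← hnPs g, ← hnPs h]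
    rw [hαl, hαr]
  have haco_raw : ∀ g h k : G, α g h * α (g * h) k = α h k * α g (h * k) := by
    intro g h k
    apply huniq (g * h * k)
    have h1 : (P g ∘ₗ P h) ∘ₗ P k = (α g h * α (g * h) k) • P (g * h * k) := by
      rw [hαP g h, LinearMap.smul_comp, hαP (g * h) k, smul_smul]
    have h2 : P g ∘ₗ (P h ∘ₗ P k) = (α h k * α g (h * k)) • P (g * (h * k)) := by
      rw [hαP h k, LinearMap.comp_smul, hαP g (h * k), smul_smul]
    rw [← h1, LinearMap.comp_assoc, h2, mul_assoc]
  -- descend to the quotient group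
  set β : (G ⧸ N) → (G ⧸ N) → ℂ := fun a b => α (s a) (s b) with hβdef
  have hβ0 : ∀ a b, β a b ≠ 0 := fun a b => hα0 _ _
  have hβeq : ∀ g h : G, α g h = β (QuotientGroup.mk g) (QuotientGroup.mk h) := by
    intro g h
    rw [hβdef, hacoset g h]
  have hβco : IsCocycle β := by
    intro a b c
    have h1 : β a b = α (s a) (s b) := rfl
    have h2 : β (a * b) c = α (s a * s b) (s c) := by
      rw [hβeq (s a * s b) (s c), QuotientGroup.mk_mul, hs, hs, hs]
    have h3 : β b c = α (s b) (s c) := rfl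
    have h4 : β a (b * c) = α (s a) (s b * s c) := by
      rw [hβeq (s a) (s b * s c), QuotientGroup.mk_mul, hs, hs, hs]
    rw [h1, h2, h3, h4]
    exact haco_raw (s a) (s b) (s c)
  have hβnorm : β 1 1 = 1 := by
    apply huniq (s 1 * s 1)
    show α (s 1) (s 1) • P (s 1 * s 1) = 1 • P (s 1 * s 1)
    rw [← hαP, hs1, hP_one, LinearMap.comp_id, one_smul, mul_one, hP_one]
  -- Sylow trivializations
  have hsylv : ∀ q : ℕ, q.Prime → ∃ S : Sylow q (G ⧸ N), ∃ ν : (G ⧸ N) → ℂ,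
      (∀ a, ν a ≠ 0) ∧ ∀ a ∈ (S : Subgroup (G ⧸ N)), ∀ b ∈ (S : Subgroup (G ⧸ N)),
        β a b = ν a * ν b / ν (a * b) := by
    intro q hq
    haveI : Fact q.Prime := ⟨hq⟩
    obtain ⟨S⟩ : Nonempty (Sylow q (G ⧸ N)) := inferInstance
    set Q : Subgroup G := (S : Subgroup (G ⧸ N)).comap (QuotientGroup.mk' N) with hQdef
    have hNQ : N ≤ Q := by
      intro n hn
      show (QuotientGroup.mk' N) n ∈ (S : Subgroup (G ⧸ N))
      have h1 : (QuotientGroup.mk' N) n = 1 := (QuotientGroup.eq_one_iff n).mpr hn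
      rw [h1]; exact one_mem _
    have hmap : Q.map (QuotientGroup.mk' N) = (S : Subgroup (G ⧸ N)) :=
      Subgroup.map_comap_eq_self_of_surjective (QuotientGroup.mk'_surjective N) _
    obtain ⟨ψ, ⟨U, hUsimple, hUchar⟩, hψθ⟩ := hyp q hq Q hNQ ⟨S, hmap.symm⟩
    haveI : Fintype ↥Q := Fintype.ofFinite _
    haveI := hUsimple
    set ι : ↥N →* ↥Q := Subgroup.inclusion hNQ with hιdef
    have hUres : ∀ n : ↥N, U.character (ι n) = W.character n := by
      intro n
      rw [hUchar, hWchar]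
      exact hψθ n
    have hcharτ : ∀ n : ↥N, (FDRep.of (U.ρ.comp ι)).character n = W.character n :=
      fun n => hUres n
    obtain ⟨F, hF0, hFe⟩ := exists_intertwiner W (U.ρ.comp ι) hcharτ
    have hrank : Module.finrank ℂ U = Module.finrank ℂ W := by
      have h1 : U.character 1 = W.character 1 := by
        have h2 := hUres 1; rwa [map_one] at h2
      rw [FDRep.char_one, FDRep.char_one] at h1
      exact_mod_cast h1
    have hFbij := intertwiner_bijective W (U.ρ.comp ι) hrank F hF0 hFe
    set E := LinearEquiv.ofBijective F hFbij with hEdef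
    set σ : ↥Q → (W →ₗ[ℂ] W) := fun x => (E.symm.toLinearMap ∘ₗ U.ρ x) ∘ₗ F with hσdef
    have hσ : ∀ (x : ↥Q) (v : W), σ x v = E.symm (U.ρ x (F v)) := fun x v => rfl
    have hFE : ∀ u : U, F (E.symm u) = u := fun u => E.apply_symm_apply u
    have hσmul : ∀ x y : ↥Q, σ (x * y) = σ x ∘ₗ σ y := by
      intro x y
      apply LinearMap.ext; intro v
      show E.symm (U.ρ (x * y) (F v)) = σ x (σ y v)
      rw [hσ y, hσ x, hFE, map_mul, Module.End.mul_apply]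
    have hσN : ∀ n : ↥N, σ (ι n) = W.ρ n := by
      intro n
      apply LinearMap.ext; intro v
      apply hFbij.1
      rw [hσ, hFE]
      have h5 := LinearMap.congr_fun (hFe n) v
      simp only [LinearMap.coe_comp, Function.comp_apply] at h5
      exact h5.symm
    have hσbij : ∀ x : ↥Q, Function.Bijective (σ x) := by
      intro x
      exact (E.symm.bijective.comp (rho_bijective U x)).comp hFbij
    have hσint : ∀ (x : ↥Q) (n : ↥N), σ x ∘ₗ W.ρ n = W.ρ (conjHom N ↑x n) ∘ₗ σ x := by
      intro x n
      have hc : x * ι n = ι (conjHom N ↑x n) * x := by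
        ext
        simp only [hιdef, Subgroup.coe_mul, Subgroup.coe_inclusion, conjHom_coe]
        group
      rw [← hσN n, ← hσmul, hc, hσmul, hσN]
    have hcex : ∀ x : ↥Q, ∃ c : ℂ, c ≠ 0 ∧ σ x = c • P ↑x :=
      fun x => scalar_of_intertwine N W ↑x (σ x) (P ↑x) (hσint x) (hP4 ↑x) (hσbij x) (hP1 ↑x)
    choose cQ hcQ0 hcQP using hcex
    have hcQmul : ∀ x y : ↥Q, cQ (x * y) = cQ x * cQ y * α ↑x ↑y := by
      intro x y
      apply huniq ((x : G) * y)
      have h7 : σ (x * y) = (cQ x * cQ y * α ↑x ↑y) • P ((x : G) * y) := by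
        rw [hσmul, hcQP x, hcQP y, LinearMap.smul_comp, LinearMap.comp_smul, hαP,
          smul_smul, smul_smul, mul_assoc]
      have h8 : σ (x * y) = cQ (x * y) • P ((x : G) * y) := hcQP (x * y)
      exact (h8.symm.trans h7)
    have hcQcoset : ∀ (n : ↥N) (x : ↥Q), cQ (ι n * x) = cQ x := by
      intro n x
      have h9 : σ (ι n * x) = cQ x • P ((↑n : G) * ↑x) := by
        rw [hσmul, hσN, hcQP x, LinearMap.comp_smul, ← hP2 n ↑x]
      have h10 : σ (ι n * x) = cQ (ι n * x) • P ((↑n : G) * ↑x) := hcQP (ι n * x)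
      exact huniq _ _ _ (h10.symm.trans h9)
    have hsQ : ∀ a ∈ (S : Subgroup (G ⧸ N)), s a ∈ Q := by
      intro a ha
      rw [hQdef, Subgroup.mem_comap]
      have h11 : (QuotientGroup.mk' N) (s a) = a := hs a
      rw [h11]; exact ha
    refine ⟨S, fun a => if h : s a ∈ Q then (cQ ⟨s a, h⟩)⁻¹ else 1, ?_, ?_⟩
    · intro a; dsimp only; split
      · exact inv_ne_zero (hcQ0 _)
      · exact one_ne_zero
    · intro a ha b hb
      have hsa := hsQ a ha
      have hsb := hsQ b hb
      have hab : a * b ∈ (S : Subgroup (G ⧸ N)) := mul_mem ha hb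
      have hsab := hsQ _ hab
      dsimp only
      rw [dif_pos hsa, dif_pos hsb, dif_pos hsab]
      have hnn : (s a * s b) * (s (a * b))⁻¹ ∈ N := by
        rw [← QuotientGroup.eq_one_iff, QuotientGroup.mk_mul, QuotientGroup.mk_mul,
          QuotientGroup.mk_inv, hs, hs, hs]
        group
      have hprod : (⟨s a, hsa⟩ * ⟨s b, hsb⟩ : ↥Q) = ι ⟨(s a * s b) * (s (a * b))⁻¹, hnn⟩
          * ⟨s (a * b), hsab⟩ := by
        ext
        simp only [hιdef, Subgroup.coe_mul, Subgroup.coe_inclusion]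
        group
      have hc12 : cQ (⟨s a, hsa⟩ * ⟨s b, hsb⟩) = cQ ⟨s (a * b), hsab⟩ := by
        rw [hprod, hcQcoset]
      have hQm : cQ ⟨s (a * b), hsab⟩
          = cQ ⟨s a, hsa⟩ * cQ ⟨s b, hsb⟩ * α (s a) (s b) := by
        rw [← hc12]
        exact hcQmul ⟨s a, hsa⟩ ⟨s b, hsb⟩
      have hβab : β a b = α (s a) (s b) := rfl
      rw [hβab]
      have h0a := hcQ0 ⟨s a, hsa⟩
      have h0b := hcQ0 ⟨s b, hsb⟩
      have h0ab := hcQ0 ⟨s (a * b), hsab⟩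
      field_simp
      linear_combination -hQm
  -- trivialize the cocycle
  obtain ⟨μ, hμ0, hμ⟩ := cob_of_sylow β hβ0 hβco hβnorm hsylv
  have hμ1 : μ 1 = 1 := by
    have h1 := hμ 1 1
    rw [hβnorm, mul_one, mul_div_assoc, div_self (hμ0 1), mul_one] at h1
    exact h1.symm
  -- the extension representation
  set ρt : Representation ℂ G W :=
    { toFun := fun g => (μ (QuotientGroup.mk g))⁻¹ • P g
      map_one' := by
        show (μ (QuotientGroup.mk (1 : G)))⁻¹ • P 1 = 1
        have h2 : (QuotientGroup.mk (1 : G) : G ⧸ N) = 1 := rfl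
        rw [h2, hμ1, inv_one, one_smul, hP_one]
        rfl
      map_mul' := by
        intro g h
        show (μ (QuotientGroup.mk (g * h)))⁻¹ • P (g * h)
          = ((μ (QuotientGroup.mk g))⁻¹ • P g) * ((μ (QuotientGroup.mk h))⁻¹ • P h)
        have hco2 : P g * P h = α g h • P (g * h) := hαP g h
        rw [smul_mul_smul_comm, hco2, smul_smul]
        congr 1
        have hα2 : α g h = μ (QuotientGroup.mk g) * μ (QuotientGroup.mk h)
            / μ (QuotientGroup.mk g * QuotientGroup.mk h) := by
          rw [hβeq g h]; exact hμ _ _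
        rw [QuotientGroup.mk_mul, hα2]
        have h0a := hμ0 (QuotientGroup.mk g)
        have h0b := hμ0 (QuotientGroup.mk h)
        have h0ab := hμ0 (QuotientGroup.mk g * QuotientGroup.mk h)
        field_simp } with hρtdef
  have hρtN : ∀ n : ↥N, ρt ↑n = W.ρ n := by
    intro n
    show (μ (QuotientGroup.mk (↑n : G)))⁻¹ • P ↑n = W.ρ n
    rw [(QuotientGroup.eq_one_iff _).mpr n.2, hμ1, inv_one, one_smul, hP3]
  set V : FDRep ℂ G := FDRep.of ρt with hVdef
  have hVρ : ∀ g, V.ρ g = ρt g := fun g => rfl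
  have hVirr : IsIrred V := by
    constructor
    · exact (nontrivial_of_simple W)
    · intro p hp
      have hWirr := isIrred_of_simple W
      refine hWirr.2 p ?_
      intro n x hx
      have h3 := hp ↑n x hx
      rwa [hVρ, hρtN] at h3
  haveI hVsimple : Simple V := simple_of_isIrred V hVirr
  refine ⟨V.character, ⟨V, hVsimple, rfl⟩, ?_⟩
  intro n
  show V.character ↑n = θ n
  have h1 : V.character ↑n = LinearMap.trace ℂ W (ρt ↑n) := rfl
  rw [h1, hρtN]
  exact congrFun hWchar n
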